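/- Under Assumptions 1 and 2, the exact prediction step incurs a one-step error bound: for any point x_k and sampling times t_k, t_{k+1} = t_k + h, the predicted point x_{k+1|k} = x_k − h·[∇ₓₓ f(x_k;t_k)]⁻¹ ∇_{tx} f(x_k;t_k) satisfies ‖x_{k+1|k} − x*(t_{k+1})‖ ≤ σ·‖x_k − x*(t_k)‖ + (h²/2)·(C₀²C₁/m³ + 2C₀C₂/m² + C₃/m), where σ := 1 + h·(C₀C₁/m² + C₂/m). -/

import Mathlib

set_option synthInstance.maxHeartbeats 1000000
set_option maxHeartbeats 4000000


noncomputable section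

/-- The setting of a time-varying, smooth, strongly convex optimization problem
`min_{x ∈ ℝⁿ} f(x;t)`, bundling the objective `f`, its derivatives, the Hessian
inverse, the optimal trajectory `x*(t)`, and Assumptions 1 and 2 of the paper. -/
structure TVOpt (n : ℕ) where
  /-- the objective `f(x;t)` -/
  f : EuclideanSpace ℝ (Fin n) → ℝ → ℝ
  /-- the gradient `∇ₓ f(x;t)` -/
  grad : EuclideanSpace ℝ (Fin n) → ℝ → EuclideanSpace ℝ (Fin n)
  /-- the Hessian `∇ₓₓ f(x;t)` -/
  hess : EuclideanSpace ℝ (Fin n) → ℝ →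
    EuclideanSpace ℝ (Fin n) →L[ℝ] EuclideanSpace ℝ (Fin n)
  /-- the Hessian inverse `[∇ₓₓ f(x;t)]⁻¹` -/
  hessInv : EuclideanSpace ℝ (Fin n) → ℝ →
    EuclideanSpace ℝ (Fin n) →L[ℝ] EuclideanSpace ℝ (Fin n)
  /-- the mixed partial derivative `∇_{tx} f(x;t)` -/
  dtgrad : EuclideanSpace ℝ (Fin n) → ℝ → EuclideanSpace ℝ (Fin n)
  /-- the third derivative tensor `∇ₓₓₓ f(x;t)` -/
  d3 : EuclideanSpace ℝ (Fin n) → ℝ →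
    EuclideanSpace ℝ (Fin n) →L[ℝ] EuclideanSpace ℝ (Fin n) →L[ℝ] EuclideanSpace ℝ (Fin n)
  /-- the time derivative of the Hessian `∇_{xtx} f(x;t)` -/
  dthess : EuclideanSpace ℝ (Fin n) → ℝ →
    EuclideanSpace ℝ (Fin n) →L[ℝ] EuclideanSpace ℝ (Fin n)
  /-- the second time derivative of the gradient `∇_{ttx} f(x;t)` -/
  dttgrad : EuclideanSpace ℝ (Fin n) → ℝ → EuclideanSpace ℝ (Fin n)
  /-- the optimal trajectory `x*(t)` -/
  xstar : ℝ → EuclideanSpace ℝ (Fin n)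
  /-- strong convexity constant -/
  m : ℝ
  /-- Hessian norm bound (gradient Lipschitz constant) -/
  L : ℝ
  C0 : ℝ
  C1 : ℝ
  C2 : ℝ
  C3 : ℝ
  m_pos : 0 < m
  grad_spec : ∀ (x : EuclideanSpace ℝ (Fin n)) (t : ℝ), HasGradientAt (fun y => f y t) (grad x t) x
  hess_spec : ∀ (x : EuclideanSpace ℝ (Fin n)) (t : ℝ), HasFDerivAt (fun y => grad y t) (hess x t) x
  dtgrad_spec : ∀ (x : EuclideanSpace ℝ (Fin n)) (t : ℝ), HasDerivAt (fun s => grad x s) (dtgrad x t) t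
  d3_spec : ∀ (x : EuclideanSpace ℝ (Fin n)) (t : ℝ), HasFDerivAt (fun y => hess y t) (d3 x t) x
  dthess_spec : ∀ (x : EuclideanSpace ℝ (Fin n)) (t : ℝ), HasDerivAt (fun s => hess x s) (dthess x t) t
  dttgrad_spec : ∀ (x : EuclideanSpace ℝ (Fin n)) (t : ℝ), HasDerivAt (fun s => dtgrad x s) (dttgrad x t) t
  /-- Assumption 1: `∇ₓₓ f(x;t) ⪰ m·I` uniformly in `x` and `t`. -/
  strong_convex : ∀ (x : EuclideanSpace ℝ (Fin n)) (t : ℝ) (v : EuclideanSpace ℝ (Fin n)),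
    m * ‖v‖ ^ 2 ≤ @inner ℝ _ _ v (hess x t v)
  hessInv_left : ∀ (x : EuclideanSpace ℝ (Fin n)) (t : ℝ), ContinuousLinearMap.comp (hessInv x t) (hess x t) =
    ContinuousLinearMap.id ℝ (EuclideanSpace ℝ (Fin n))
  hessInv_right : ∀ (x : EuclideanSpace ℝ (Fin n)) (t : ℝ), ContinuousLinearMap.comp (hess x t) (hessInv x t) =
    ContinuousLinearMap.id ℝ (EuclideanSpace ℝ (Fin n))
  /-- Assumption 2: bounded derivatives, uniformly in `x` and `t`. -/
  hess_bound : ∀ (x : EuclideanSpace ℝ (Fin n)) (t : ℝ), ‖hess x t‖ ≤ L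
  dtgrad_bound : ∀ (x : EuclideanSpace ℝ (Fin n)) (t : ℝ), ‖dtgrad x t‖ ≤ C0
  d3_bound : ∀ (x : EuclideanSpace ℝ (Fin n)) (t : ℝ), ‖d3 x t‖ ≤ C1
  dthess_bound : ∀ (x : EuclideanSpace ℝ (Fin n)) (t : ℝ), ‖dthess x t‖ ≤ C2
  dttgrad_bound : ∀ (x : EuclideanSpace ℝ (Fin n)) (t : ℝ), ‖dttgrad x t‖ ≤ C3
  /-- `x*(t)` minimizes `f(·;t)` -/
  xstar_min : ∀ t : ℝ, IsMinOn (fun x => f x t) Set.univ (xstar t)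
  /-- equivalently, `∇ₓ f(x*(t);t) = 0` -/
  xstar_grad : ∀ t : ℝ, grad (xstar t) t = 0


section Aux
open intervalIntegral

variable {n : ℕ} (P : TVOpt n)

local notation "E" => EuclideanSpace ℝ (Fin n)

lemma TVOpt.C0_nonneg : 0 ≤ P.C0 := le_trans (norm_nonneg _) (P.dtgrad_bound 0 0)
lemma TVOpt.C1_nonneg : 0 ≤ P.C1 := by
  have h1 := P.d3_bound 0 0; have h2 := norm_nonneg (P.d3 0 0); linarith
lemma TVOpt.C2_nonneg : 0 ≤ P.C2 := le_trans (norm_nonneg _) (P.dthess_bound 0 0)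
lemma TVOpt.C3_nonneg : 0 ≤ P.C3 := le_trans (norm_nonneg _) (P.dttgrad_bound 0 0)

lemma TVOpt.hess_hessInv (x : E) (t : ℝ) (w : E) :
    P.hess x t (P.hessInv x t w) = w := by
  have := congrArg (fun (A : E →L[ℝ] E) => A w) (P.hessInv_right x t)
  simpa using this

lemma TVOpt.hessInv_hess (x : E) (t : ℝ) (w : E) :
    P.hessInv x t (P.hess x t w) = w := by
  have := congrArg (fun (A : E →L[ℝ] E) => A w) (P.hessInv_left x t)
  simpa using this

lemma TVOpt.hessInv_apply_bound (x : E) (t : ℝ) (w : E) :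
    ‖P.hessInv x t w‖ ≤ ‖w‖ / P.m := by
  set v := P.hessInv x t w with hv
  have h1 := P.strong_convex x t v
  rw [show P.hess x t v = w from P.hess_hessInv x t w] at h1
  have h3 : (inner ℝ v w : ℝ) ≤ ‖v‖ * ‖w‖ := real_inner_le_norm v w
  rw [le_div_iff₀ P.m_pos]
  rcases eq_or_lt_of_le (norm_nonneg v) with h0 | h0
  · rw [← h0]; simpa using norm_nonneg w
  · nlinarith

lemma seg_hasDerivAt (y v : E) (s : ℝ) :
    HasDerivAt (fun s : ℝ => y + s • v) v s := by
  simpa using ((hasDerivAt_id s).smul_const v).const_add y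

lemma TVOpt.grad_seg (t : ℝ) (y v : E) (s : ℝ) :
    HasDerivAt (fun s : ℝ => P.grad (y + s • v) t) (P.hess (y + s • v) t v) s :=
  ((P.hess_spec (y + s • v) t).comp_hasDerivAt s (seg_hasDerivAt y v s) :)

lemma TVOpt.strong_mono (t : ℝ) (x y : E) :
    P.m * ‖x - y‖ ^ 2 ≤ (inner ℝ (x - y) (P.grad x t - P.grad y t) : ℝ) := by
  set v := x - y with hv
  have key : ∀ s : ℝ, HasDerivAt
      (fun s : ℝ => (inner ℝ v (P.grad (y + s • v) t) : ℝ) - s * (P.m * ‖v‖ ^ 2))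
      ((inner ℝ v (P.hess (y + s • v) t v) : ℝ) - P.m * ‖v‖ ^ 2) s := by
    intro s
    have h1 : HasDerivAt (fun s : ℝ => (inner ℝ v (P.grad (y + s • v) t) : ℝ))
        (inner ℝ v (P.hess (y + s • v) t v) : ℝ) s := by
      simpa using (HasDerivAt.inner ℝ (hasDerivAt_const s v) (P.grad_seg t y v s))
    exact h1.sub (hasDerivAt_mul_const (P.m * ‖v‖ ^ 2))
  have mono : Monotone (fun s : ℝ =>
      (inner ℝ v (P.grad (y + s • v) t) : ℝ) - s * (P.m * ‖v‖ ^ 2)) := by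
    apply monotone_of_deriv_nonneg
    · exact fun s => (key s).differentiableAt
    · intro s
      rw [(key s).deriv]
      have := P.strong_convex (y + s • v) t v
      linarith
  have h01 := mono (show (0:ℝ) ≤ 1 by norm_num)
  simp only [zero_smul, one_smul, add_zero, zero_mul, sub_zero, one_mul] at h01
  have hx : y + v = x := by rw [hv]; abel
  rw [hx] at h01
  rw [inner_sub_right]
  linarith

lemma TVOpt.dist_xstar (x : E) (t : ℝ) :
    P.m * ‖x - P.xstar t‖ ≤ ‖P.grad x t‖ := by
  have h1 := P.strong_mono t x (P.xstar t)
  rw [P.xstar_grad, sub_zero] at h1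
  have h2 : (inner ℝ (x - P.xstar t) (P.grad x t) : ℝ) ≤ ‖x - P.xstar t‖ * ‖P.grad x t‖ :=
    real_inner_le_norm _ _
  rcases eq_or_lt_of_le (norm_nonneg (x - P.xstar t)) with h0 | h0
  · rw [← h0]; simpa using norm_nonneg (P.grad x t)
  · nlinarith

lemma TVOpt.hess_lipschitz_x (t : ℝ) (x y : E) :
    ‖P.hess x t - P.hess y t‖ ≤ P.C1 * ‖x - y‖ :=
  Convex.norm_image_sub_le_of_norm_hasFDerivWithin_le
    (fun z _ => (P.d3_spec z t).hasFDerivWithinAt)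
    (fun z _ => P.d3_bound z t) convex_univ (Set.mem_univ y) (Set.mem_univ x)

lemma TVOpt.hess_lipschitz_t (x : E) (t t' : ℝ) :
    ‖P.hess x t - P.hess x t'‖ ≤ P.C2 * |t - t'| := by
  have := Convex.norm_image_sub_le_of_norm_hasDerivWithin_le
    (f := fun s : ℝ => P.hess x s) (f' := fun s => P.dthess x s)
    (fun s _ => (P.dthess_spec x s).hasDerivWithinAt)
    (fun s _ => P.dthess_bound x s) convex_univ (Set.mem_univ t') (Set.mem_univ t)
  simpa [Real.norm_eq_abs] using this

lemma TVOpt.dtgrad_lipschitz_t (x : E) (t t' : ℝ) :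
    ‖P.dtgrad x t - P.dtgrad x t'‖ ≤ P.C3 * |t - t'| := by
  have := Convex.norm_image_sub_le_of_norm_hasDerivWithin_le
    (f := fun s : ℝ => P.dtgrad x s) (f' := fun s => P.dttgrad x s)
    (fun s _ => (P.dttgrad_spec x s).hasDerivWithinAt)
    (fun s _ => P.dttgrad_bound x s) convex_univ (Set.mem_univ t') (Set.mem_univ t)
  simpa [Real.norm_eq_abs] using this

lemma TVOpt.cont_hess (t : ℝ) : Continuous fun x : E => P.hess x t :=
  continuous_iff_continuousAt.mpr fun x => (P.d3_spec x t).continuousAt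

lemma TVOpt.cont_seg_hess (t : ℝ) (y v : E) :
    Continuous fun s : ℝ => P.hess (y + s • v) t v := by
  have h1 : Continuous fun s : ℝ => P.hess (y + s • v) t :=
    (P.cont_hess t).comp (continuous_const.add (continuous_id.smul continuous_const))
  exact h1.clm_apply continuous_const

lemma TVOpt.ftc_x (t : ℝ) (y v : E) :
    P.grad (y + v) t - P.grad y t = ∫ s in (0:ℝ)..1, P.hess (y + s • v) t v := by
  have h := integral_eq_sub_of_hasDerivAt (f := fun s : ℝ => P.grad (y + s • v) t)
    (fun s _ => P.grad_seg t y v s)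
    ((P.cont_seg_hess t y v).intervalIntegrable 0 1)
  simp only [one_smul, zero_smul, add_zero] at h
  exact h.symm

lemma TVOpt.cont_dtgrad_t (x : E) : Continuous fun τ : ℝ => P.dtgrad x τ :=
  continuous_iff_continuousAt.mpr fun τ => (P.dttgrad_spec x τ).continuousAt

lemma TVOpt.ftc_t (x : E) (a b : ℝ) :
    P.grad x b - P.grad x a = ∫ τ in a..b, P.dtgrad x τ :=
  (integral_eq_sub_of_hasDerivAt (fun τ _ => P.dtgrad_spec x τ)
    ((P.cont_dtgrad_t x).intervalIntegrable a b)).symm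

/-- Clairaut-type bound: `dtgrad` is `C₂`-Lipschitz in `x`. -/
lemma TVOpt.dtgrad_lipschitz_x (t : ℝ) (x y : E) :
    ‖P.dtgrad x t - P.dtgrad y t‖ ≤ P.C2 * ‖x - y‖ := by
  set v := x - y with hv
  have hx : y + v = x := by rw [hv]; abel
  have hD : HasDerivAt (fun τ => P.grad x τ - P.grad y τ)
      (P.dtgrad x t - P.dtgrad y t) t := (P.dtgrad_spec x t).sub (P.dtgrad_spec y t)
  have key : ∀ τ : ℝ, ‖(P.grad x τ - P.grad y τ) - (P.grad x t - P.grad y t)‖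
      ≤ P.C2 * ‖v‖ * |τ - t| := by
    intro τ
    have e1 := P.ftc_x τ y v
    have e2 := P.ftc_x t y v
    rw [hx] at e1 e2
    have hint1 := (P.cont_seg_hess τ y v).intervalIntegrable (μ := MeasureTheory.volume) (0:ℝ) 1
    have hint2 := (P.cont_seg_hess t y v).intervalIntegrable (μ := MeasureTheory.volume) (0:ℝ) 1
    have e3 : (P.grad x τ - P.grad y τ) - (P.grad x t - P.grad y t)
        = ∫ s in (0:ℝ)..1, (P.hess (y + s • v) τ v - P.hess (y + s • v) t v) := by
      rw [e1, e2, intervalIntegral.integral_sub hint1 hint2]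
    rw [e3]
    have hb : ∀ s ∈ Set.uIoc (0:ℝ) 1,
        ‖P.hess (y + s • v) τ v - P.hess (y + s • v) t v‖ ≤ P.C2 * |τ - t| * ‖v‖ := by
      intro s _
      calc ‖P.hess (y + s • v) τ v - P.hess (y + s • v) t v‖
          = ‖(P.hess (y + s • v) τ - P.hess (y + s • v) t) v‖ := by simp
        _ ≤ ‖P.hess (y + s • v) τ - P.hess (y + s • v) t‖ * ‖v‖ :=
            ContinuousLinearMap.le_opNorm _ _
        _ ≤ P.C2 * |τ - t| * ‖v‖ :=
            mul_le_mul_of_nonneg_right (P.hess_lipschitz_t _ τ t) (norm_nonneg v)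
    calc ‖∫ s in (0:ℝ)..1, (P.hess (y + s • v) τ v - P.hess (y + s • v) t v)‖
        ≤ P.C2 * |τ - t| * ‖v‖ * |1 - (0:ℝ)| :=
          intervalIntegral.norm_integral_le_of_norm_le_const hb
      _ = P.C2 * ‖v‖ * |τ - t| := by rw [show |1 - (0:ℝ)| = 1 by norm_num]; ring
  -- derivative bound from the difference bound
  have hs := hasDerivAt_iff_tendsto_slope.mp hD
  have hnorm : Filter.Tendsto (fun τ => ‖slope (fun τ => P.grad x τ - P.grad y τ) t τ‖)
      (nhdsWithin t {t}ᶜ) (nhds ‖P.dtgrad x t - P.dtgrad y t‖) :=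
    (continuous_norm.tendsto _).comp hs
  refine le_of_tendsto hnorm ?_
  filter_upwards [self_mem_nhdsWithin] with τ hτ
  have hne : τ - t ≠ 0 := sub_ne_zero.mpr hτ
  rw [slope_def_module]
  rw [norm_smul, norm_inv, Real.norm_eq_abs]
  have habs : 0 < |τ - t| := abs_pos.mpr hne
  rw [inv_mul_le_iff₀ habs]
  calc ‖(P.grad x τ - P.grad y τ) - (P.grad x t - P.grad y t)‖
      ≤ P.C2 * ‖v‖ * |τ - t| := key τ
    _ = |τ - t| * (P.C2 * ‖v‖) := by ring

/-- The prediction direction `x ↦ [∇ₓₓf]⁻¹∇ₜₓf` is Lipschitz in `x`. -/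
lemma TVOpt.pred_lipschitz (t : ℝ) (x y : E) :
    ‖P.hessInv x t (P.dtgrad x t) - P.hessInv y t (P.dtgrad y t)‖ ≤
      (P.C0 * P.C1 / P.m ^ 2 + P.C2 / P.m) * ‖x - y‖ := by
  set a := P.hessInv x t (P.dtgrad x t) with ha
  set b := P.hessInv y t (P.dtgrad y t) with hb
  have hbn : ‖b‖ ≤ P.C0 / P.m := by
    refine le_trans (P.hessInv_apply_bound y t (P.dtgrad y t)) ?_
    exact (div_le_div_iff_of_pos_right P.m_pos).mpr (P.dtgrad_bound y t)
  have h1 : P.hess y t b = P.dtgrad y t := P.hess_hessInv y t _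
  have key : a - b = P.hessInv x t
      ((P.dtgrad x t - P.dtgrad y t) + (P.hess y t - P.hess x t) b) := by
    have h2 : (P.hess y t - P.hess x t) b = P.dtgrad y t - P.hess x t b := by
      rw [ContinuousLinearMap.sub_apply, h1]
    rw [map_add, map_sub, h2, map_sub, P.hessInv_hess]
    rw [ha, hb]
    abel
  have hw : ‖(P.dtgrad x t - P.dtgrad y t) + (P.hess y t - P.hess x t) b‖
      ≤ P.C2 * ‖x - y‖ + P.C1 * ‖x - y‖ * (P.C0 / P.m) := by
    refine le_trans (norm_add_le _ _) (add_le_add (P.dtgrad_lipschitz_x t x y) ?_)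
    calc ‖(P.hess y t - P.hess x t) b‖
        ≤ ‖P.hess y t - P.hess x t‖ * ‖b‖ := ContinuousLinearMap.le_opNorm _ _
      _ ≤ (P.C1 * ‖x - y‖) * (P.C0 / P.m) := by
          refine mul_le_mul ?_ hbn (norm_nonneg b)
            (mul_nonneg P.C1_nonneg (norm_nonneg _))
          rw [norm_sub_rev x y] at *
          simpa [norm_sub_rev y x] using P.hess_lipschitz_x t y x
      _ = P.C1 * ‖x - y‖ * (P.C0 / P.m) := by ring
  calc ‖a - b‖ = ‖P.hessInv x t
        ((P.dtgrad x t - P.dtgrad y t) + (P.hess y t - P.hess x t) b)‖ := by rw [key]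
    _ ≤ ‖(P.dtgrad x t - P.dtgrad y t) + (P.hess y t - P.hess x t) b‖ / P.m :=
        P.hessInv_apply_bound x t _
    _ ≤ (P.C2 * ‖x - y‖ + P.C1 * ‖x - y‖ * (P.C0 / P.m)) / P.m :=
        (div_le_div_iff_of_pos_right P.m_pos).mpr hw
    _ = (P.C0 * P.C1 / P.m ^ 2 + P.C2 / P.m) * ‖x - y‖ := by
        have hm : P.m ≠ 0 := P.m_pos.ne'
        field_simp
        ring

/-- Second-order Taylor bound for the gradient along the exact prediction step. -/
lemma TVOpt.taylor_grad (t h : ℝ) (hh : 0 < h) (y u : E)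
    (hy : P.grad y t = 0) (hu : P.hess y t u + h • P.dtgrad y t = 0) :
    ‖P.grad (y + u) (t + h)‖ ≤
      (P.C1 * ‖u‖ * ‖u‖ / 2 + P.C2 * h * ‖u‖) + P.C3 * h ^ 2 / 2 := by
  have int1 : IntervalIntegrable (fun s : ℝ => P.hess (y + s • u) (t + h) u)
      MeasureTheory.volume 0 1 :=
    (P.cont_seg_hess (t + h) y u).intervalIntegrable _ _
  have int1' : IntervalIntegrable (fun _ : ℝ => P.hess y t u)
      MeasureTheory.volume 0 1 := intervalIntegrable_const
  have e1 : P.grad (y + u) (t + h) - P.grad y (t + h) - P.hess y t u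
      = ∫ s in (0:ℝ)..1, (P.hess (y + s • u) (t + h) u - P.hess y t u) := by
    have hc : (∫ _ in (0:ℝ)..1, P.hess y t u) = P.hess y t u := by simp
    rw [intervalIntegral.integral_sub int1 int1', ← P.ftc_x (t + h) y u, hc]
  have b1 : ‖P.grad (y + u) (t + h) - P.grad y (t + h) - P.hess y t u‖
      ≤ P.C1 * ‖u‖ * ‖u‖ / 2 + P.C2 * h * ‖u‖ := by
    rw [e1]
    have hg : IntervalIntegrable (fun s : ℝ => (P.C1 * ‖u‖ * ‖u‖) * s + P.C2 * h * ‖u‖)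
        MeasureTheory.volume 0 1 :=
      ((continuous_const.mul continuous_id).add continuous_const).intervalIntegrable _ _
    have hae : ∀ᵐ s ∂MeasureTheory.volume.restrict (Set.uIoc (0:ℝ) 1),
        ‖P.hess (y + s • u) (t + h) u - P.hess y t u‖
          ≤ (P.C1 * ‖u‖ * ‖u‖) * s + P.C2 * h * ‖u‖ := by
      filter_upwards [MeasureTheory.ae_restrict_mem measurableSet_uIoc] with s hs
      rw [Set.uIoc_of_le (by norm_num : (0:ℝ) ≤ 1)] at hs
      have hs0 : 0 ≤ s := hs.1.le
      calc ‖P.hess (y + s • u) (t + h) u - P.hess y t u‖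
          = ‖(P.hess (y + s • u) (t + h) - P.hess y t) u‖ := by simp
        _ ≤ ‖P.hess (y + s • u) (t + h) - P.hess y t‖ * ‖u‖ :=
            ContinuousLinearMap.le_opNorm _ _
        _ ≤ (‖P.hess (y + s • u) (t + h) - P.hess y (t + h)‖
              + ‖P.hess y (t + h) - P.hess y t‖) * ‖u‖ := by
            refine mul_le_mul_of_nonneg_right ?_ (norm_nonneg u)
            exact norm_sub_le_norm_sub_add_norm_sub _ _ _
        _ ≤ (P.C1 * (s * ‖u‖) + P.C2 * h) * ‖u‖ := by
            refine mul_le_mul_of_nonneg_right (add_le_add ?_ ?_) (norm_nonneg u)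
            · have := P.hess_lipschitz_x (t + h) (y + s • u) y
              simpa [norm_smul, abs_of_nonneg hs0, mul_assoc] using this
            · have := P.hess_lipschitz_t y (t + h) t
              simpa [abs_of_pos hh] using this
        _ = (P.C1 * ‖u‖ * ‖u‖) * s + P.C2 * h * ‖u‖ := by ring
    have hval : (∫ s in (0:ℝ)..1, ((P.C1 * ‖u‖ * ‖u‖) * s + P.C2 * h * ‖u‖))
        = P.C1 * ‖u‖ * ‖u‖ / 2 + P.C2 * h * ‖u‖ := by
      rw [intervalIntegral.integral_add
          ((by fun_prop : Continuous fun s : ℝ => P.C1 * ‖u‖ * ‖u‖ * s).intervalIntegrable _ _)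
          intervalIntegrable_const,
        intervalIntegral.integral_const_mul, integral_id, intervalIntegral.integral_const]
      norm_num
      ring
    refine le_trans (intervalIntegral.norm_integral_le_abs_of_norm_le hae hg) ?_
    rw [hval, abs_of_nonneg (add_nonneg
      (div_nonneg (mul_nonneg (mul_nonneg P.C1_nonneg (norm_nonneg u)) (norm_nonneg u))
        (by norm_num))
      (mul_nonneg (mul_nonneg P.C2_nonneg hh.le) (norm_nonneg u)))]
  have intt : IntervalIntegrable (fun τ => P.dtgrad y τ) MeasureTheory.volume t (t + h) :=
    (P.cont_dtgrad_t y).intervalIntegrable _ _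
  have e2 : P.grad y (t + h) - P.grad y t - h • P.dtgrad y t
      = ∫ τ in t..(t + h), (P.dtgrad y τ - P.dtgrad y t) := by
    have hc : (∫ _ in t..(t + h), P.dtgrad y t) = h • P.dtgrad y t := by simp
    rw [intervalIntegral.integral_sub intt intervalIntegrable_const,
      ← P.ftc_t y t (t + h), hc]
  have b2 : ‖P.grad y (t + h) - P.grad y t - h • P.dtgrad y t‖ ≤ P.C3 * h ^ 2 / 2 := by
    rw [e2]
    have hg : IntervalIntegrable (fun τ : ℝ => P.C3 * (τ - t))
        MeasureTheory.volume t (t + h) :=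
      (continuous_const.mul (continuous_id.sub continuous_const)).intervalIntegrable _ _
    have hae : ∀ᵐ τ ∂MeasureTheory.volume.restrict (Set.uIoc t (t + h)),
        ‖P.dtgrad y τ - P.dtgrad y t‖ ≤ P.C3 * (τ - t) := by
      filter_upwards [MeasureTheory.ae_restrict_mem measurableSet_uIoc] with τ hτ
      rw [Set.uIoc_of_le (by linarith : t ≤ t + h)] at hτ
      have := P.dtgrad_lipschitz_t y τ t
      rwa [abs_of_nonneg (by linarith [hτ.1] : (0:ℝ) ≤ τ - t)] at this
    have hval : (∫ τ in t..(t + h), P.C3 * (τ - t)) = P.C3 * (h ^ 2 / 2) := by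
      rw [intervalIntegral.integral_const_mul]
      have hsub : (∫ τ in t..(t + h), (τ - t)) = h ^ 2 / 2 := by
        have hid : IntervalIntegrable (fun τ : ℝ => τ) MeasureTheory.volume t (t + h) :=
          continuous_id.intervalIntegrable _ _
        rw [intervalIntegral.integral_sub hid intervalIntegrable_const, integral_id,
          intervalIntegral.integral_const]
        simp [smul_eq_mul]
        ring
      rw [hsub]
    refine le_trans (intervalIntegral.norm_integral_le_abs_of_norm_le hae hg) ?_
    rw [hval, abs_of_nonneg (mul_nonneg P.C3_nonneg (by positivity))]
    exact le_of_eq (by ring)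
  have hA : P.grad (y + u) (t + h)
      = (P.grad (y + u) (t + h) - P.grad y (t + h) - P.hess y t u)
        + (P.grad y (t + h) - P.grad y t - h • P.dtgrad y t) := by
    have h0 : P.hess y t u = -(h • P.dtgrad y t) := eq_neg_of_add_eq_zero_left hu
    rw [h0, hy]
    abel
  calc ‖P.grad (y + u) (t + h)‖
      ≤ ‖P.grad (y + u) (t + h) - P.grad y (t + h) - P.hess y t u‖
        + ‖P.grad y (t + h) - P.grad y t - h • P.dtgrad y t‖ := by
        conv_lhs => rw [hA]
        exact norm_add_le _ _
    _ ≤ (P.C1 * ‖u‖ * ‖u‖ / 2 + P.C2 * h * ‖u‖) + P.C3 * h ^ 2 / 2 := add_le_add b1 b2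

end Aux

/-- One-step error bound of the exact prediction step:
`‖x_(k+1|k) − x*(t_(k+1))‖ ≤ σ‖x_k − x*(t_k)‖ + (h²/2)(C₀²C₁/m³ + 2C₀C₂/m² + C₃/m)`,
with `σ = 1 + h(C₀C₁/m² + C₂/m)`. -/
theorem prediction_one_step_error (n : ℕ) (P : TVOpt n) (h : ℝ) (hh : 0 < h) :
    ∀ (k : ℕ) (xk : EuclideanSpace ℝ (Fin n)),
      ‖(xk - h • P.hessInv xk ((k : ℝ) * h) (P.dtgrad xk ((k : ℝ) * h)))
          - P.xstar (((k : ℝ) + 1) * h)‖ ≤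
        (1 + h * (P.C0 * P.C1 / P.m ^ 2 + P.C2 / P.m)) * ‖xk - P.xstar ((k : ℝ) * h)‖ +
        h ^ 2 / 2 * (P.C0 ^ 2 * P.C1 / P.m ^ 3 + 2 * P.C0 * P.C2 / P.m ^ 2 + P.C3 / P.m) := by
  intro k xk
  set t := (k : ℝ) * h with htdef
  have ht1 : ((k : ℝ) + 1) * h = t + h := by rw [htdef]; ring
  rw [ht1]
  set y := P.xstar t with hydef
  set gk := P.hessInv xk t (P.dtgrad xk t) with hgk
  set gy := P.hessInv y t (P.dtgrad y t) with hgy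
  set u : EuclideanSpace ℝ (Fin n) := -(h • gy) with hudef
  set K := P.C0 * P.C1 / P.m ^ 2 + P.C2 / P.m with hK
  have ha : ‖(xk - h • gk) - (y + u)‖ ≤ (1 + h * K) * ‖xk - y‖ := by
    have hid : (xk - h • gk) - (y + u) = (xk - y) - h • (gk - gy) := by
      rw [hudef, smul_sub]; abel
    rw [hid]
    calc ‖(xk - y) - h • (gk - gy)‖ ≤ ‖xk - y‖ + ‖h • (gk - gy)‖ := norm_sub_le _ _
      _ = ‖xk - y‖ + h * ‖gk - gy‖ := by rw [norm_smul, Real.norm_eq_abs, abs_of_pos hh]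
      _ ≤ ‖xk - y‖ + h * (K * ‖xk - y‖) :=
          add_le_add_right (mul_le_mul_of_nonneg_left (P.pred_lipschitz t xk y) hh.le) _
      _ = (1 + h * K) * ‖xk - y‖ := by ring
  have hu0 : P.hess y t u + h • P.dtgrad y t = 0 := by
    rw [hudef, map_neg, map_smul, hgy, P.hess_hessInv]
    exact neg_add_cancel _
  have hb := P.taylor_grad t h hh y u (P.xstar_grad t) hu0
  have hdist := P.dist_xstar (y + u) (t + h)
  have hun : ‖u‖ ≤ h * (P.C0 / P.m) := by
    rw [hudef, norm_neg, norm_smul, Real.norm_eq_abs, abs_of_pos hh]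
    refine mul_le_mul_of_nonneg_left ?_ hh.le
    rw [hgy]
    exact le_trans (P.hessInv_apply_bound y t _)
      ((div_le_div_iff_of_pos_right P.m_pos).mpr (P.dtgrad_bound y t))
  have hfinal2 : ‖(y + u) - P.xstar (t + h)‖ ≤
      h ^ 2 / 2 * (P.C0 ^ 2 * P.C1 / P.m ^ 3 + 2 * P.C0 * P.C2 / P.m ^ 2 + P.C3 / P.m) := by
    have hm := P.m_pos
    have c1 := P.C1_nonneg
    have c2 := P.C2_nonneg
    have hb' : (0:ℝ) ≤ h * (P.C0 / P.m) := le_trans (norm_nonneg u) hun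
    have h1 : (P.C1 * ‖u‖ * ‖u‖ / 2 + P.C2 * h * ‖u‖) + P.C3 * h ^ 2 / 2
        ≤ (P.C1 * (h * (P.C0 / P.m)) * (h * (P.C0 / P.m)) / 2
            + P.C2 * h * (h * (P.C0 / P.m))) + P.C3 * h ^ 2 / 2 := by
      nlinarith [mul_le_mul hun hun (norm_nonneg u) hb',
        mul_nonneg c2 hh.le, norm_nonneg u]
    have h2 : P.m * ‖(y + u) - P.xstar (t + h)‖
        ≤ (P.C1 * (h * (P.C0 / P.m)) * (h * (P.C0 / P.m)) / 2
            + P.C2 * h * (h * (P.C0 / P.m))) + P.C3 * h ^ 2 / 2 :=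
      le_trans (le_trans hdist hb) h1
    have heq : (P.C1 * (h * (P.C0 / P.m)) * (h * (P.C0 / P.m)) / 2
            + P.C2 * h * (h * (P.C0 / P.m))) + P.C3 * h ^ 2 / 2
        = P.m * (h ^ 2 / 2 *
            (P.C0 ^ 2 * P.C1 / P.m ^ 3 + 2 * P.C0 * P.C2 / P.m ^ 2 + P.C3 / P.m)) := by
      field_simp
    rw [heq] at h2
    exact le_of_mul_le_mul_left h2 hm
  calc ‖(xk - h • gk) - P.xstar (t + h)‖
      ≤ ‖(xk - h • gk) - (y + u)‖ + ‖(y + u) - P.xstar (t + h)‖ :=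
        norm_sub_le_norm_sub_add_norm_sub _ _ _
    _ ≤ (1 + h * K) * ‖xk - y‖
        + h ^ 2 / 2 * (P.C0 ^ 2 * P.C1 / P.m ^ 3 + 2 * P.C0 * P.C2 / P.m ^ 2 + P.C3 / P.m) :=
        add_le_add ha hfinal2
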